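/- Suppose f is homogeneous of degree ν = 1 with respect to (λ^r, λ^q) and ℓ, ȷ are homogeneous of degree μ. Under existence of optimal sequences, for every x and ε > 0, V_{d,1,1}(λ^r(ε)x) = ε^μ V_{d,1,1}(x), and if u* is optimal for J_{d,1,1} at x then the sequence with k-th element λ^q(ε)u*_k is optimal for J_{d,1,1} at λ^r(ε)x. -/
import Mathlib


open scoped ENNReal

noncomputable section

def dil {n : ℕ} (r : Fin n → ℝ) (ε : ℝ) (x : Fin n → ℝ) : Fin n → ℝ :=
  fun i => ε ^ (r i) * x i

def dilPow {n : ℕ} (r : Fin n → ℝ) (ε c : ℝ) (x : Fin n → ℝ) : Fin n → ℝ :=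
  fun i => ε ^ (c * r i) * x i

def sol {n m : ℕ} (f : (Fin n → ℝ) → (Fin m → ℝ) → Fin n → ℝ)
    (u : ℕ → Fin m → ℝ) (x : Fin n → ℝ) : ℕ → Fin n → ℝ
  | 0 => x
  | k + 1 => f (sol f u x k) (u k)

/-- Cost `J_{d,γ1,γ2}(x,u) = Σ_{k<d} γ1^{γ2^k} ℓ(φ(k,x,u),u_k) + γ1^{γ2^d} ȷ(φ(d,x,u))`. -/
def cost {n m : ℕ} (f : (Fin n → ℝ) → (Fin m → ℝ) → Fin n → ℝ)
    (ℓ : (Fin n → ℝ) → (Fin m → ℝ) → ℝ≥0∞) (J : (Fin n → ℝ) → ℝ≥0∞)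
    (d : ℕ) (γ1 γ2 : ℝ) (x : Fin n → ℝ) (u : ℕ → Fin m → ℝ) : ℝ≥0∞ :=
  (∑ k ∈ Finset.range d, ENNReal.ofReal (γ1 ^ (γ2 ^ k)) * ℓ (sol f u x k) (u k))
    + ENNReal.ofReal (γ1 ^ (γ2 ^ d)) * J (sol f u x d)

/-- Optimal value function `V_{d,γ1,γ2}(x)`. -/
def val {n m : ℕ} (f : (Fin n → ℝ) → (Fin m → ℝ) → Fin n → ℝ)
    (ℓ : (Fin n → ℝ) → (Fin m → ℝ) → ℝ≥0∞) (J : (Fin n → ℝ) → ℝ≥0∞)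
    (d : ℕ) (γ1 γ2 : ℝ) (x : Fin n → ℝ) : ℝ≥0∞ :=
  ⨅ u : ℕ → Fin m → ℝ, cost f ℓ J d γ1 γ2 x u

lemma sol_dil {n m : ℕ} {f : (Fin n → ℝ) → (Fin m → ℝ) → Fin n → ℝ}
    {r : Fin n → ℝ} {q : Fin m → ℝ}
    (hf : ∀ x u (ε : ℝ), 0 < ε → f (dil r ε x) (dil q ε u) = dil r ε (f x u))
    {ε : ℝ} (hε : 0 < ε) (x : Fin n → ℝ) (u : ℕ → Fin m → ℝ) :
    ∀ k, sol f (fun k => dil q ε (u k)) (dil r ε x) k = dil r ε (sol f u x k) := by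
  intro k
  induction k with
  | zero => rfl
  | succ k ih => simp only [sol, ih, hf _ _ _ hε]

lemma cost_dil {n m : ℕ} {f : (Fin n → ℝ) → (Fin m → ℝ) → Fin n → ℝ}
    {ℓ : (Fin n → ℝ) → (Fin m → ℝ) → ℝ≥0∞} {J : (Fin n → ℝ) → ℝ≥0∞}
    {r : Fin n → ℝ} {q : Fin m → ℝ} {μ : ℝ}
    (hf : ∀ x u (ε : ℝ), 0 < ε → f (dil r ε x) (dil q ε u) = dil r ε (f x u))
    (hℓ : ∀ x u (ε : ℝ), 0 < ε →
      ℓ (dil r ε x) (dil q ε u) = ENNReal.ofReal (ε ^ μ) * ℓ x u)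
    (hJ : ∀ x (ε : ℝ), 0 < ε → J (dil r ε x) = ENNReal.ofReal (ε ^ μ) * J x)
    (d : ℕ) {ε : ℝ} (hε : 0 < ε) (x : Fin n → ℝ) (u : ℕ → Fin m → ℝ) :
    cost f ℓ J d 1 1 (dil r ε x) (fun k => dil q ε (u k))
      = ENNReal.ofReal (ε ^ μ) * cost f ℓ J d 1 1 x u := by
  unfold cost
  simp only [one_pow, Real.one_rpow, ENNReal.ofReal_one, one_mul]
  rw [mul_add, Finset.mul_sum]
  congr 1
  · refine Finset.sum_congr rfl fun k _ => ?_
    rw [sol_dil hf hε, hℓ _ _ _ hε]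
  · rw [sol_dil hf hε, hJ _ _ hε]

lemma dil_inv {n : ℕ} (r : Fin n → ℝ) {ε : ℝ} (hε : 0 < ε) (x : Fin n → ℝ) :
    dil r ε⁻¹ (dil r ε x) = x := by
  funext i
  simp only [dil]
  rw [Real.inv_rpow hε.le, ← mul_assoc,
    inv_mul_cancel₀ (Real.rpow_pos_of_pos hε _).ne', one_mul]

/-- Corollary (ν = 1 case): `V_{d,1,1}(λ^r(ε)x) = ε^μ V_{d,1,1}(x)` and
`Λ^q_{1,d}(ε)u*` is optimal for `J_{d,1,1}` at `λ^r(ε)x`. -/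
theorem stmt4 {n m : ℕ} (f : (Fin n → ℝ) → (Fin m → ℝ) → Fin n → ℝ)
    (ℓ : (Fin n → ℝ) → (Fin m → ℝ) → ℝ≥0∞) (J : (Fin n → ℝ) → ℝ≥0∞)
    (r : Fin n → ℝ) (q : Fin m → ℝ) (μ : ℝ)
    (hr : ∀ i, 0 < r i) (hq : ∀ j, 0 < q j)
    (hf : ∀ x u (ε : ℝ), 0 < ε → f (dil r ε x) (dil q ε u) = dil r ε (f x u))
    (hℓ : ∀ x u (ε : ℝ), 0 < ε →
      ℓ (dil r ε x) (dil q ε u) = ENNReal.ofReal (ε ^ μ) * ℓ x u)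
    (hJ : ∀ x (ε : ℝ), 0 < ε → J (dil r ε x) = ENNReal.ofReal (ε ^ μ) * J x)
    (d : ℕ) (hd : 0 < d)
    (hex : ∀ (γ1 γ2 : ℝ), 0 < γ1 → ∀ x : Fin n → ℝ,
      ∃ u, cost f ℓ J d γ1 γ2 x u = val f ℓ J d γ1 γ2 x ∧ cost f ℓ J d γ1 γ2 x u ≠ ⊤) :
    ∀ (x : Fin n → ℝ) (ε : ℝ), 0 < ε →
      val f ℓ J d 1 1 (dil r ε x) = ENNReal.ofReal (ε ^ μ) * val f ℓ J d 1 1 x ∧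
      ∀ ustar : ℕ → Fin m → ℝ,
        cost f ℓ J d 1 1 x ustar = val f ℓ J d 1 1 x →
        cost f ℓ J d 1 1 (dil r ε x) (fun k => dil q ε (ustar k))
          = val f ℓ J d 1 1 (dil r ε x) := by
  intro x ε hε
  have hεinv : (0:ℝ) < ε⁻¹ := inv_pos.mpr hε
  set a : ℝ≥0∞ := ENNReal.ofReal (ε ^ μ) with ha
  set b : ℝ≥0∞ := ENNReal.ofReal (ε⁻¹ ^ μ) with hb
  have hab : a * b = 1 := by
    rw [ha, hb, ← ENNReal.ofReal_mul (Real.rpow_nonneg hε.le _),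
      ← Real.mul_rpow hε.le hεinv.le, mul_inv_cancel₀ hε.ne', Real.one_rpow,
      ENNReal.ofReal_one]
  have h1 : val f ℓ J d 1 1 (dil r ε x) ≤ a * val f ℓ J d 1 1 x := by
    obtain ⟨u, hu, -⟩ := hex 1 1 one_pos x
    calc val f ℓ J d 1 1 (dil r ε x)
        ≤ cost f ℓ J d 1 1 (dil r ε x) (fun k => dil q ε (u k)) := iInf_le _ _
      _ = a * cost f ℓ J d 1 1 x u := cost_dil hf hℓ hJ d hε x u
      _ = a * val f ℓ J d 1 1 x := by rw [hu]
  have h2 : a * val f ℓ J d 1 1 x ≤ val f ℓ J d 1 1 (dil r ε x) := by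
    obtain ⟨u', hu', -⟩ := hex 1 1 one_pos (dil r ε x)
    have key : val f ℓ J d 1 1 x ≤ b * val f ℓ J d 1 1 (dil r ε x) := by
      calc val f ℓ J d 1 1 x
          = val f ℓ J d 1 1 (dil r ε⁻¹ (dil r ε x)) := by rw [dil_inv r hε]
        _ ≤ cost f ℓ J d 1 1 (dil r ε⁻¹ (dil r ε x)) (fun k => dil q ε⁻¹ (u' k)) :=
            iInf_le _ _
        _ = b * cost f ℓ J d 1 1 (dil r ε x) u' := cost_dil hf hℓ hJ d hεinv _ u'
        _ = b * val f ℓ J d 1 1 (dil r ε x) := by rw [hu']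
    calc a * val f ℓ J d 1 1 x
        ≤ a * (b * val f ℓ J d 1 1 (dil r ε x)) := mul_le_mul_right key a
      _ = (a * b) * val f ℓ J d 1 1 (dil r ε x) := by rw [mul_assoc]
      _ = val f ℓ J d 1 1 (dil r ε x) := by rw [hab, one_mul]
  have hmain : val f ℓ J d 1 1 (dil r ε x) = a * val f ℓ J d 1 1 x :=
    le_antisymm h1 h2
  refine ⟨hmain, fun ustar hus => ?_⟩
  rw [cost_dil hf hℓ hJ d hε x ustar, hus, hmain]
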